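/- Let V be a strict weak order on a finite candidate set C and A an axis on C. Then V is single-plateaued with respect to A if and only if V contains neither a v-valley nor a nonpeak plateau with respect to A. -/

import Mathlib

def VValley {C : Type*} (A V : C → C → Prop) : Prop :=
  ∃ c1 c2 c3 : C, A c1 c2 ∧ A c2 c3 ∧ V c1 c2 ∧ V c3 c2

def UValley {C : Type*} (A V : C → C → Prop) : Prop :=
  ∃ a b c d : C, a ≠ b ∧ a ≠ c ∧ a ≠ d ∧ b ≠ c ∧ b ≠ d ∧ c ≠ d ∧
    A a b ∧ A b d ∧ A a c ∧ A c d ∧ V a b ∧ V d c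

def Extends {C : Type*} (V T : C → C → Prop) : Prop :=
  ∀ x y, V x y → T x y

/-- `V` is a strict partial order: asymmetric and transitive. -/
def IsSPO {C : Type*} (V : C → C → Prop) : Prop :=
  (∀ x y, V x y → ¬ V y x) ∧ (∀ x y z, V x y → V y z → V x z)

/-- `V` is a strict weak order: a strict partial order with transitive incomparability. -/
def IsSWO {C : Type*} (V : C → C → Prop) : Prop :=
  IsSPO V ∧ ∀ x y z, (¬ V x y ∧ ¬ V y x) → (¬ V y z ∧ ¬ V z y) → (¬ V x z ∧ ¬ V z x)

/-- `V` possibly single-peaked w.r.t. axis `A`: it extends to a total order with no v-valley. -/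
def PossSP {C : Type*} (A V : C → C → Prop) : Prop :=
  ∃ T : C → C → Prop, IsStrictTotalOrder C T ∧ Extends V T ∧ ¬ VValley A T

/-- `V` is single-plateaued w.r.t. `A`: the axis splits into consecutive segments
`X`, `Y`, `Z` where `Y` is exactly the set of maximal elements, `V` strictly increases
along `X`, the elements of `Y` are preferred to everything else, and `V` strictly
decreases along `Z`. -/
def SinglePlateaued {C : Type*} (A V : C → C → Prop) : Prop :=
  ∃ X Y Z : Set C,
    (∀ c, c ∈ X ∨ c ∈ Y ∨ c ∈ Z) ∧
    Disjoint X Y ∧ Disjoint Y Z ∧ Disjoint X Z ∧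
    (∀ x ∈ X, ∀ y ∈ Y, A x y) ∧ (∀ y ∈ Y, ∀ z ∈ Z, A y z) ∧ (∀ x ∈ X, ∀ z ∈ Z, A x z) ∧
    Y = {y | ∀ c, ¬ V c y} ∧
    (∀ x ∈ X, ∀ x' ∈ X, A x x' → V x' x) ∧
    (∀ y ∈ Y, ∀ c ∈ X ∪ Z, V y c) ∧
    (∀ z ∈ Z, ∀ z' ∈ Z, A z z' → V z z')

/-- A nonpeak plateau w.r.t. `A`: `a ⊳ b ⊳ c` with (`a ≻ b` and `b ∼ c`) or (`c ≻ b` and `b ∼ a`). -/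
def NonpeakPlateau {C : Type*} (A V : C → C → Prop) : Prop :=
  ∃ a b c : C, A a b ∧ A b c ∧
    ((V a b ∧ ¬ V b c ∧ ¬ V c b) ∨ (V c b ∧ ¬ V b a ∧ ¬ V a b))

private lemma exists_max_aux {C : Type*} {R : C → C → Prop}
    (hi : ∀ x, ¬ R x x) (ht : ∀ x y z, R x y → R y z → R x z) :
    ∀ s : Finset C, s.Nonempty → ∃ y ∈ s, ∀ c ∈ s, ¬ R c y := by
  classical
  intro s
  induction s using Finset.induction_on with
  | empty => intro h; simp at h
  | insert _ _ hns ih =>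
    rename_i a s
    intro _
    by_cases hs : s.Nonempty
    · obtain ⟨y, hy, hmax⟩ := ih hs
      by_cases hay : R a y
      · refine ⟨a, Finset.mem_insert_self _ _, ?_⟩
        intro c hc hca
        rcases Finset.mem_insert.1 hc with rfl | hc
        · exact hi _ hca
        · exact hmax c hc (ht c a y hca hay)
      · refine ⟨y, Finset.mem_insert_of_mem hy, ?_⟩
        intro c hc hcy
        rcases Finset.mem_insert.1 hc with rfl | hc
        · exact hay hcy
        · exact hmax c hc hcy
    · refine ⟨a, Finset.mem_insert_self _ _, ?_⟩
      intro c hc hca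
      rcases Finset.mem_insert.1 hc with rfl | hc
      · exact hi _ hca
      · exact hs ⟨c, hc⟩

theorem stmt12 {C : Type*} [Fintype C] (A V : C → C → Prop)
    (hA : IsStrictTotalOrder C A) (hV : IsSWO V) :
    SinglePlateaued A V ↔ (¬ VValley A V ∧ ¬ NonpeakPlateau A V) := by
  classical
  obtain ⟨⟨hasym, htrans⟩, hindiff⟩ := hV
  have hAtri : ∀ x y : C, A x y ∨ x = y ∨ A y x := fun x y => by
    by_cases h1 : A x y
    · exact Or.inl h1
    by_cases h2 : A y x
    · exact Or.inr (Or.inr h2)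
    exact Or.inr (Or.inl (hA.trichotomous x y h1 h2))
  have hAirr : ∀ x : C, ¬ A x x := fun x => hA.irrefl x
  have hAtrans : ∀ x y z : C, A x y → A y z → A x z := fun x y z => hA.trans x y z
  have hAasym : ∀ x y : C, A x y → ¬ A y x := by
    intro x y hxy hyx; exact hAirr x (hAtrans x y x hxy hyx)
  have hVirr : ∀ x : C, ¬ V x x := fun x h => hasym x x h h
  constructor
  · rintro ⟨X, Y, Z, hcov, hXY, hYZ, hXZ, hAXY, hAYZ, hAXZ, hYmax, hXinc, hYtop, hZdec⟩
    -- membership determination lemmas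
    have memb : ∀ b c : C, A b c → b ∈ X → c ∉ Y ∧ c ∉ Z → c ∈ X := by
      intro b c _ _ h
      rcases hcov c with h1 | h1 | h1
      · exact h1
      · exact absurd h1 h.1
      · exact absurd h1 h.2
    have pred_in_X : ∀ b c : C, A b c → c ∈ X → b ∈ X := by
      intro b c hbc hc
      rcases hcov b with h1 | h1 | h1
      · exact h1
      · exact absurd hbc (hAasym c b (hAXY c hc b h1))
      · exact absurd hbc (hAasym c b (hAXZ c hc b h1))
    have succ_in_Z : ∀ b c : C, A b c → b ∈ Z → c ∈ Z := by
      intro b c hbc hb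
      rcases hcov c with h1 | h1 | h1
      · exact absurd hbc (hAasym c b (hAXZ c h1 b hb))
      · exact absurd hbc (hAasym c b (hAYZ c h1 b hb))
      · exact h1
    constructor
    · rintro ⟨c1, c2, c3, h12, h23, hv1, hv3⟩
      have hc2 : c2 ∉ Y := by
        intro h; rw [hYmax] at h; exact h c1 hv1
      rcases hcov c2 with h2 | h2 | h2
      · have h1 : c1 ∈ X := pred_in_X c1 c2 h12 h2
        exact hasym c1 c2 hv1 (hXinc c1 h1 c2 h2 h12)
      · exact hc2 h2
      · have h3 : c3 ∈ Z := succ_in_Z c2 c3 h23 h2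
        exact hasym c3 c2 hv3 (hZdec c2 h2 c3 h3 h23)
    · rintro ⟨a, b, c, hab, hbc, hcase⟩
      rcases hcase with ⟨hVab, hnbc, hncb⟩ | ⟨hVcb, hnba, hnab⟩
      · have hb : b ∉ Y := by
          intro h; rw [hYmax] at h; exact h a hVab
        rcases hcov b with h1 | h1 | h1
        · have ha : a ∈ X := pred_in_X a b hab h1
          exact hasym a b hVab (hXinc a ha b h1 hab)
        · exact hb h1
        · have hc : c ∈ Z := succ_in_Z b c hbc h1
          exact hnbc (hZdec b h1 c hc hbc)
      · have hb : b ∉ Y := by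
          intro h; rw [hYmax] at h; exact h c hVcb
        rcases hcov b with h1 | h1 | h1
        · have ha : a ∈ X := pred_in_X a b hab h1
          exact hnba (hXinc a ha b h1 hab)
        · exact hb h1
        · have hc : c ∈ Z := succ_in_Z b c hbc h1
          exact hasym c b hVcb (hZdec b h1 c hc hbc)
  · rintro ⟨hnoV, hnoP⟩
    by_cases hne : Nonempty C
    · -- Y = maximal elements
      set Y : Set C := {y | ∀ c, ¬ V c y} with hYdef
      have hYne : ∃ y, y ∈ Y := by
        obtain ⟨y, _, hy⟩ := exists_max_aux hVirr htrans Finset.univ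
          (Finset.univ_nonempty)
        exact ⟨y, fun c => hy c (Finset.mem_univ c)⟩
      -- maximal beats nonmaximal
      have hbeats : ∀ y ∈ Y, ∀ c, c ∉ Y → V y c := by
        intro y hy c hc
        simp only [hYdef, Set.mem_setOf_eq, not_forall, not_not] at hc
        obtain ⟨d, hd⟩ := hc
        by_contra hyc
        have hcy : ¬ V c y := hy c
        by_cases hyd : V y d
        · exact hyc (htrans y d c hyd hd)
        · have h1 := hindiff c y d ⟨hcy, hyc⟩ ⟨hyd, hy d⟩
          exact h1.2 hd
      set X : Set C := {c | c ∉ Y ∧ ∃ y ∈ Y, A c y} with hXdef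
      set Z : Set C := {c | c ∉ Y ∧ ∃ y ∈ Y, A y c} with hZdef
      -- X elements are before every Y element
      have hXbefore : ∀ x ∈ X, ∀ y ∈ Y, A x y := by
        rintro x ⟨hxY, y0, hy0, hxy0⟩ y hy
        rcases hAtri x y with h | h | h
        · exact h
        · exact absurd hy (h ▸ hxY)
        · -- y A x A y0 : v-valley since V y x and V y0 x
          exact absurd ⟨y, x, y0, h, hxy0, hbeats y hy x hxY, hbeats y0 hy0 x hxY⟩ hnoV
      have hZafter : ∀ y ∈ Y, ∀ z ∈ Z, A y z := by
        rintro y hy z ⟨hzY, y0, hy0, hy0z⟩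
        rcases hAtri y z with h | h | h
        · exact h
        · exact absurd hy (h ▸ hzY)
        · exact absurd ⟨y0, z, y, hy0z, h, hbeats y0 hy0 z hzY, hbeats y hy z hzY⟩ hnoV
      refine ⟨X, Y, Z, ?_, ?_, ?_, ?_, hXbefore, hZafter, ?_, rfl, ?_, ?_, ?_⟩
      · -- cover
        intro c
        by_cases hc : c ∈ Y
        · exact Or.inr (Or.inl hc)
        · obtain ⟨y, hy⟩ := hYne
          rcases hAtri c y with h | h | h
          · exact Or.inl ⟨hc, y, hy, h⟩
          · exact absurd hy (h ▸ hc)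
          · exact Or.inr (Or.inr ⟨hc, y, hy, h⟩)
      · exact Set.disjoint_left.2 fun c hc h => hc.1 h
      · exact Set.disjoint_right.2 fun c hc h => hc.1 h
      · -- X Z disjoint
        refine Set.disjoint_left.2 ?_
        rintro c ⟨hcY, y1, hy1, hcy1⟩ ⟨_, y2, hy2, hy2c⟩
        exact hnoV ⟨y2, c, y1, hy2c, hcy1, hbeats y2 hy2 c hcY, hbeats y1 hy1 c hcY⟩
      · -- X before Z
        intro x hx z hz
        obtain ⟨y, hy⟩ := hYne
        exact hAtrans x y z (hXbefore x hx y hy) (hZafter y hy z hz)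
      · -- increasing on X
        rintro x hx x' hx' hxx'
        obtain ⟨y, hy⟩ := hYne
        have hx'y : A x' y := hXbefore x' hx' y hy
        have hyx' : V y x' := hbeats y hy x' hx'.1
        rcases hAtri x x' with _ | h | h
        · by_contra hnx'x
          by_cases hxx'' : V x x'
          · exact hnoV ⟨x, x', y, hxx', hx'y, hxx'', hyx'⟩
          · exact hnoP ⟨x, x', y, hxx', hx'y, Or.inr ⟨hyx', hnx'x, hxx''⟩⟩
        · exact absurd hxx' (h ▸ hAirr x')
        · exact absurd hxx' (hAasym x' x h)
      · -- Y beats X ∪ Z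
        rintro y hy c hc
        rcases hc with hc | hc
        · exact hbeats y hy c hc.1
        · exact hbeats y hy c hc.1
      · -- decreasing on Z
        rintro z hz z' hz' hzz'
        obtain ⟨y, hy⟩ := hYne
        have hyz : A y z := hZafter y hy z hz
        have hyVz : V y z := hbeats y hy z hz.1
        by_contra hnzz'
        by_cases hz'z : V z' z
        · exact hnoV ⟨y, z, z', hyz, hzz', hyVz, hz'z⟩
        · exact hnoP ⟨y, z, z', hyz, hzz', Or.inl ⟨hyVz, hnzz', hz'z⟩⟩
    · -- C empty
      refine ⟨∅, ∅, ∅, fun c => (hne ⟨c⟩).elim, by simp, by simp, by simp,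
        fun x hx => absurd hx (Set.notMem_empty x),
        fun x hx => absurd hx (Set.notMem_empty x),
        fun x hx => absurd hx (Set.notMem_empty x),
        ?_,
        fun x hx => absurd hx (Set.notMem_empty x),
        fun x hx => absurd hx (Set.notMem_empty x),
        fun x hx => absurd hx (Set.notMem_empty x)⟩
      ext c
      exact (hne ⟨c⟩).elim
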